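/- Strong duality (primal part): assume S = {x : Bx ≥ b} and T are both nonempty. If y ∈ ℝ^q satisfies φ(y, y*) ≥ 0 for all y* ∈ 𝒟*, then y ∈ 𝒫 = P[S] + C. -/

import Mathlib

open Matrix

/-- Membership in the cone generated by a list of vectors. -/
def InCone {d : ℕ} : List (Fin d → ℝ) → (Fin d → ℝ) → Prop
  | [], v => v = 0
  | a :: L, v => ∃ t : ℝ, 0 ≤ t ∧ InCone L (v - t • a)

lemma inCone_of_tail {d : ℕ} {L : List (Fin d → ℝ)} {a v : Fin d → ℝ}
    (h : InCone L v) : InCone (a :: L) v :=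
  ⟨0, le_refl 0, by simpa using h⟩

lemma inCone_shift {d : ℕ} (a : Fin d → ℝ) (g : (Fin d → ℝ) → ℝ) :
    ∀ (M : List (Fin d → ℝ)) (u : Fin d → ℝ), (∀ b ∈ M, 0 ≤ g b) →
      InCone (M.map fun b => b + g b • a) u → ∃ θ : ℝ, 0 ≤ θ ∧ InCone M (u - θ • a)
  | [], u, _, h => ⟨0, le_refl 0, by simpa [InCone] using h⟩
  | b :: M, u, hg, h => by
    obtain ⟨t, ht, h'⟩ := h
    obtain ⟨θ', hθ', h''⟩ := inCone_shift a g M (u - t • (b + g b • a))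
      (fun x hx => hg x (List.mem_cons_of_mem _ hx)) h'
    have hgb : 0 ≤ g b := hg b (List.mem_cons_self)
    refine ⟨θ' + t * g b, by positivity, t, ht, ?_⟩
    convert h'' using 1
    simp only [smul_add, smul_smul, add_smul]
    abel

lemma farkas_aux {d : ℕ} : ∀ (k : ℕ) (L : List (Fin d → ℝ)), L.length = k → ∀ v : Fin d → ℝ,
    InCone L v ∨ ∃ w : Fin d → ℝ, (∀ a ∈ L, w ⬝ᵥ a ≤ 0) ∧ 0 < w ⬝ᵥ v := by
  intro k
  induction k with
  | zero =>
    intro L hL v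
    rw [List.length_eq_zero_iff] at hL
    subst hL
    by_cases hv : v = 0
    · exact Or.inl hv
    · refine Or.inr ⟨v, by simp, ?_⟩
      have hne : v ⬝ᵥ v ≠ 0 := fun h => hv ((dotProduct_self_eq_zero (v := v)).mp h)
      have hnn : 0 ≤ v ⬝ᵥ v := Finset.sum_nonneg fun i _ => mul_self_nonneg _
      exact lt_of_le_of_ne hnn (Ne.symm hne)
  | succ k ih =>
    intro L hL v
    match L, hL with
    | a :: L, hL =>
    have hLlen : L.length = k := by simpa using hL
    rcases ih L hLlen v with h | ⟨w, hw, hwv⟩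
    · exact Or.inl (inCone_of_tail h)
    by_cases ha : w ⬝ᵥ a ≤ 0
    · exact Or.inr ⟨w, by intro x hx; rcases List.mem_cons.mp hx with rfl | hx
                          exacts [ha, hw x hx], hwv⟩
    push_neg at ha
    -- project
    set f : (Fin d → ℝ) → (Fin d → ℝ) := fun b => b + (-((w ⬝ᵥ b) / (w ⬝ᵥ a))) • a with hf
    have hLlen' : (L.map f).length = k := by simpa using hLlen
    set v' : Fin d → ℝ := v - ((w ⬝ᵥ v) / (w ⬝ᵥ a)) • a with hv'
    rcases ih (L.map f) hLlen' v' with h | ⟨w', hw', hwv'⟩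
    · left
      obtain ⟨θ, hθ, hmem⟩ := inCone_shift a (fun b => -((w ⬝ᵥ b) / (w ⬝ᵥ a))) L v'
        (fun x hx => by
          have := hw x hx
          have : (w ⬝ᵥ x) / (w ⬝ᵥ a) ≤ 0 := div_nonpos_of_nonpos_of_nonneg this ha.le
          linarith) h
      refine ⟨(w ⬝ᵥ v) / (w ⬝ᵥ a) + θ, by positivity, ?_⟩
      convert hmem using 1
      rw [hv', add_smul]
      abel
    · right
      refine ⟨w' - ((w' ⬝ᵥ a) / (w ⬝ᵥ a)) • w, ?_, ?_⟩
      · intro x hx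
        rcases List.mem_cons.mp hx with rfl | hx
        · simp [sub_dotProduct, smul_dotProduct, div_mul_cancel₀ _ (ne_of_gt ha)]
        · have := hw' (f x) (List.mem_map_of_mem hx)
          have hexp : (w' - ((w' ⬝ᵥ a) / (w ⬝ᵥ a)) • w) ⬝ᵥ x = w' ⬝ᵥ f x := by
            simp only [hf, sub_dotProduct, smul_dotProduct,
              dotProduct_add, dotProduct_smul]
            field_simp
            ring
          rw [hexp]; exact this
      · have hexp : (w' - ((w' ⬝ᵥ a) / (w ⬝ᵥ a)) • w) ⬝ᵥ v = w' ⬝ᵥ v' := by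
          simp only [hv', sub_dotProduct, smul_dotProduct,
            dotProduct_sub, dotProduct_smul]
          field_simp
          ring
        rw [hexp]; exact hwv'

lemma farkas {d : ℕ} (L : List (Fin d → ℝ)) (v : Fin d → ℝ) :
    InCone L v ∨ ∃ w : Fin d → ℝ, (∀ a ∈ L, w ⬝ᵥ a ≤ 0) ∧ 0 < w ⬝ᵥ v :=
  farkas_aux L.length L rfl v

lemma inCone_ofFn_append {d : ℕ} : ∀ (k : ℕ) (g : Fin k → (Fin d → ℝ)) (M : List (Fin d → ℝ))
    (v : Fin d → ℝ), InCone (List.ofFn g ++ M) v →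
      ∃ μ : Fin k → ℝ, (∀ i, 0 ≤ μ i) ∧ InCone M (v - ∑ i, μ i • g i)
  | 0, g, M, v, h => ⟨0, fun i => le_refl 0, by simpa using h⟩
  | (k+1), g, M, v, h => by
    rw [List.ofFn_succ] at h
    obtain ⟨t, ht, h'⟩ := h
    obtain ⟨μ', hμ', h''⟩ := inCone_ofFn_append k (fun i => g i.succ) M _ h'
    refine ⟨Fin.cons t μ', fun i => ?_, ?_⟩
    · rcases Fin.eq_zero_or_eq_succ i with rfl | ⟨j, rfl⟩
      · simpa using ht
      · simpa using hμ' j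
    · rw [Fin.sum_univ_succ]
      simpa [Fin.cons_zero, Fin.cons_succ, sub_sub] using h''

lemma dot_append {m k : ℕ} (w : Fin (m + k) → ℝ) (f : Fin m → ℝ) (g : Fin k → ℝ) :
    w ⬝ᵥ Fin.append f g =
      (fun i => w (Fin.castAdd k i)) ⬝ᵥ f + (fun i => w (Fin.natAdd m i)) ⬝ᵥ g := by
  simp [dotProduct, Fin.sum_univ_add]

lemma append_apply_sum {m k : ℕ} {ι : Type*} [Fintype ι] (μ : ι → ℝ)
    (h : ι → Fin (m+k) → ℝ) (i : Fin (m+k)) :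
    (∑ j, μ j • h j) i = ∑ j, μ j * h j i := by
  rw [Finset.sum_apply]
  simp

/-- The coupling function of geometric duality (dimension q+1, last coordinate plays
the role of the q-th coordinate). -/
def phiCoupling (q : ℕ) (c y ystar : Fin (q + 1) → ℝ) : ℝ :=
  (∑ i : Fin q, y i.castSucc * ystar i.castSucc)
    + y (Fin.last q) * (1 - ∑ i : Fin q, c i.castSucc * ystar i.castSucc)
    - ystar (Fin.last q)

/-- Strong duality, primal part: if φ(y, y*) ≥ 0 for all y* ∈ 𝒟*, then y ∈ 𝒫. -/
theorem strong_duality_primal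
    (q n m p : ℕ)
    (B : Matrix (Fin m) (Fin n) ℝ) (b : Fin m → ℝ) (P : Matrix (Fin (q+1)) (Fin n) ℝ)
    (Y : Matrix (Fin (q+1)) (Fin p) ℝ)
    (C : Set (Fin (q+1) → ℝ))
    (hC : C = {y | ∃ lam : Fin p → ℝ, 0 ≤ lam ∧ y = Y.mulVec lam})
    (hCpointed : ∀ x ∈ C, -x ∈ C → x = 0)
    (c : Fin (q+1) → ℝ) (hc : c ∈ interior C) (hcq : c (Fin.last q) = 1)
    (S : Set (Fin n → ℝ)) (hS : S = {x | b ≤ B.mulVec x}) (hSne : S.Nonempty)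
    (UP : Set (Fin (q+1) → ℝ))
    (hUP : UP = {y | ∃ x ∈ S, ∃ k ∈ C, y = P.mulVec x + k})
    (T : Set ((Fin m → ℝ) × (Fin (q+1) → ℝ)))
    (hT : T = {uw | 0 ≤ uw.1 ∧ Bᵀ.mulVec uw.1 = Pᵀ.mulVec uw.2 ∧
      c ⬝ᵥ uw.2 = 1 ∧ 0 ≤ Yᵀ.mulVec uw.2})
    (hTne : T.Nonempty)
    (Dstar : Set (Fin (q+1) → ℝ))
    (hDstar : Dstar = {d | ∃ uw ∈ T, ∃ k : ℝ, 0 ≤ k ∧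
      d = Function.update uw.2 (Fin.last q) (b ⬝ᵥ uw.1) - k • (Pi.single (Fin.last q) 1 : Fin (q+1) → ℝ)})
    (y : Fin (q+1) → ℝ)
    (hy : ∀ ystar ∈ Dstar, 0 ≤ phiCoupling q c y ystar) :
    y ∈ UP := by
  classical
  set G : Fin n → (Fin (m + (q+1)) → ℝ) :=
    fun j => Fin.append (fun i => B i j) (fun i => P i j) with hGdef
  set E : Fin m → (Fin (m + (q+1)) → ℝ) :=
    fun i0 => Fin.append (-(Pi.single i0 (1:ℝ))) 0 with hEdef
  set H : Fin p → (Fin (m + (q+1)) → ℝ) :=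
    fun j => Fin.append 0 (fun i => Y i j) with hHdef
  set L : List (Fin (m + (q+1)) → ℝ) :=
    List.ofFn G ++ (List.ofFn (fun j => -(G j)) ++ (List.ofFn E ++ List.ofFn H)) with hLdef
  set v : Fin (m + (q+1)) → ℝ := Fin.append b y with hvdef
  rcases farkas L v with hin | ⟨wt, hwt, hposd⟩
  · -- feasible case : extract x and lam
    rw [hLdef] at hin
    obtain ⟨μ₁, hμ₁, h1⟩ := inCone_ofFn_append n G _ v hin
    obtain ⟨μ₂, hμ₂, h2⟩ := inCone_ofFn_append n _ _ _ h1
    obtain ⟨μ₃, hμ₃, h3⟩ := inCone_ofFn_append m E _ _ h2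
    rw [← List.append_nil (List.ofFn H)] at h3
    obtain ⟨lam, hlam, h4⟩ := inCone_ofFn_append p H [] _ h3
    have heq : v - (∑ i, μ₁ i • G i) - (∑ i, μ₂ i • -(G i)) - (∑ i, μ₃ i • E i)
        - (∑ i, lam i • H i) = 0 := h4
    set x : Fin n → ℝ := fun j => μ₁ j - μ₂ j with hxdef
    have hrow1 : ∀ i : Fin m, B.mulVec x i = b i + μ₃ i := by
      intro i
      have := congrFun heq (Fin.castAdd (q+1) i)
      simp only [Pi.sub_apply, Pi.zero_apply, append_apply_sum] at this
      simp only [hGdef, hEdef, hHdef, hvdef, Fin.append_left, Pi.neg_apply, Pi.zero_apply,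
        Pi.single_apply, mul_ite, mul_one, mul_zero, mul_neg, Finset.sum_neg_distrib,
        Finset.sum_ite_eq', Finset.mem_univ, if_true] at this
      rw [Finset.sum_ite_eq] at this
      simp only [Finset.mem_univ, if_true, Finset.sum_const_zero] at this
      have hmv : B.mulVec x i = (∑ j, μ₁ j * B i j) - (∑ j, μ₂ j * B i j) := by
        rw [← Finset.sum_sub_distrib]
        simp only [Matrix.mulVec, dotProduct, hxdef]
        exact Finset.sum_congr rfl fun j _ => by ring
      rw [hmv]; linarith
    have hrow2 : ∀ i : Fin (q+1), y i = P.mulVec x i + Y.mulVec lam i := by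
      intro i
      have := congrFun heq (Fin.natAdd m i)
      simp only [Pi.sub_apply, Pi.zero_apply, append_apply_sum] at this
      simp only [hGdef, hEdef, hHdef, hvdef, Fin.append_right, Pi.neg_apply, Pi.zero_apply,
        mul_zero, mul_neg, Finset.sum_neg_distrib, Finset.sum_const_zero] at this
      have hmv : P.mulVec x i = (∑ j, μ₁ j * P i j) - (∑ j, μ₂ j * P i j) := by
        rw [← Finset.sum_sub_distrib]
        simp only [Matrix.mulVec, dotProduct, hxdef]
        exact Finset.sum_congr rfl fun j _ => by ring
      have hmv2 : Y.mulVec lam i = ∑ j, lam j * Y i j := by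
        simp only [Matrix.mulVec, dotProduct]
        exact Finset.sum_congr rfl fun j _ => by ring
      rw [hmv, hmv2]; linarith
    rw [hUP]
    refine ⟨x, ?_, Y.mulVec lam, ?_, ?_⟩
    · rw [hS]; intro i; have := hrow1 i; have := hμ₃ i; dsimp; linarith
    · rw [hC]; exact ⟨lam, hlam, rfl⟩
    · funext i; rw [hrow2 i]; rfl
  · -- infeasible case : derive a contradiction
    exfalso
    set u : Fin m → ℝ := fun i => wt (Fin.castAdd (q+1) i) with hudef
    set z : Fin (q+1) → ℝ := fun i => wt (Fin.natAdd m i) with hzdef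
    set w : Fin (q+1) → ℝ := -z with hwdef
    have hmem : ∀ a, (∃ j, G j = a) ∨ (∃ j, -(G j) = a) ∨ (∃ i, E i = a) ∨ (∃ j, H j = a) →
        wt ⬝ᵥ a ≤ 0 := by
      intro a ha
      apply hwt
      rw [hLdef]
      simp only [List.mem_append, List.mem_ofFn, Set.mem_range]
      tauto
    have hG1 : ∀ j, u ⬝ᵥ (fun i => B i j) + z ⬝ᵥ (fun i => P i j) ≤ 0 := by
      intro j
      have := hmem (G j) (Or.inl ⟨j, rfl⟩)
      rwa [hGdef, dot_append] at this
    have hG2 : ∀ j, 0 ≤ u ⬝ᵥ (fun i => B i j) + z ⬝ᵥ (fun i => P i j) := by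
      intro j
      have := hmem (-(G j)) (Or.inr (Or.inl ⟨j, rfl⟩))
      rw [dotProduct_neg, hGdef, dot_append] at this
      linarith
    have hu : 0 ≤ u := by
      intro i0
      have := hmem (E i0) (Or.inr (Or.inr (Or.inl ⟨i0, rfl⟩)))
      rw [hEdef, dot_append, dotProduct_neg, dotProduct_single,
        dotProduct_zero] at this
      simpa using by linarith
    have hYz : ∀ j, z ⬝ᵥ (fun i => Y i j) ≤ 0 := by
      intro j
      have := hmem (H j) (Or.inr (Or.inr (Or.inr ⟨j, rfl⟩)))
      rwa [hHdef, dot_append, dotProduct_zero, zero_add] at this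
    have hpos : 0 < u ⬝ᵥ b + z ⬝ᵥ y := by
      rw [hvdef, dot_append] at hposd; exact hposd
    have hBt : Bᵀ.mulVec u = Pᵀ.mulVec w := by
      funext j
      have h1 : Bᵀ.mulVec u j = u ⬝ᵥ (fun i => B i j) := by
        simp only [Matrix.mulVec, dotProduct, Matrix.transpose_apply]
        exact Finset.sum_congr rfl fun i _ => by ring
      have h2 : Pᵀ.mulVec w j = -(z ⬝ᵥ (fun i => P i j)) := by
        simp only [Matrix.mulVec, dotProduct, Matrix.transpose_apply, hwdef,
          Pi.neg_apply, ← Finset.sum_neg_distrib]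
        exact Finset.sum_congr rfl fun i _ => by ring
      rw [h1, h2]
      have := hG1 j; have := hG2 j; linarith
    have hYw : 0 ≤ Yᵀ.mulVec w := by
      intro j
      have h2 : Yᵀ.mulVec w j = -(z ⬝ᵥ (fun i => Y i j)) := by
        simp only [Matrix.mulVec, dotProduct, Matrix.transpose_apply, hwdef,
          Pi.neg_apply, ← Finset.sum_neg_distrib]
        exact Finset.sum_congr rfl fun i _ => by ring
      rw [Pi.zero_apply, h2]
      have := hYz j; linarith
    have hgt : w ⬝ᵥ y < b ⬝ᵥ u := by
      have h1 : w ⬝ᵥ y = -(z ⬝ᵥ y) := by rw [hwdef, neg_dotProduct]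
      have h2 : b ⬝ᵥ u = u ⬝ᵥ b := dotProduct_comm b u
      linarith
    -- nonneg of w against C
    have hwC : ∀ k ∈ C, 0 ≤ w ⬝ᵥ k := by
      intro k hk
      rw [hC] at hk
      obtain ⟨lam, hlam, rfl⟩ := hk
      rw [Matrix.dotProduct_mulVec, ← Matrix.mulVec_transpose]
      exact Finset.sum_nonneg fun j _ => mul_nonneg (hYw j) (hlam j)
    by_cases hcw : 0 < c ⬝ᵥ w
    · -- scale to get an element of T
      set s : ℝ := (c ⬝ᵥ w)⁻¹ with hsdef
      have hs : 0 < s := inv_pos.mpr hcw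
      have hmemT : (s • u, s • w) ∈ T := by
        rw [hT]
        refine ⟨smul_nonneg hs.le hu, ?_, ?_, ?_⟩
        · rw [Matrix.mulVec_smul, Matrix.mulVec_smul, hBt]
        · rw [dotProduct_smul, smul_eq_mul, hsdef, inv_mul_cancel₀ (ne_of_gt hcw)]
        · rw [Matrix.mulVec_smul]
          exact smul_nonneg hs.le hYw
      set ystar : Fin (q+1) → ℝ :=
        Function.update (s • w) (Fin.last q) (b ⬝ᵥ (s • u)) with hystardef
      have hyst : 0 ≤ phiCoupling q c y ystar := by
        apply hy
        rw [hDstar]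
        refine ⟨(s • u, s • w), hmemT, 0, le_refl 0, ?_⟩
        simp [hystardef]
      have hup1 : ∀ i : Fin q, ystar i.castSucc = s * w i.castSucc := by
        intro i
        rw [hystardef, Function.update_of_ne (Fin.castSucc_lt_last i).ne]
        simp
      have hup2 : ystar (Fin.last q) = s * (b ⬝ᵥ u) := by
        rw [hystardef, Function.update_self, dotProduct_smul, smul_eq_mul]
      have hsc : s * ((∑ i : Fin q, c i.castSucc * w i.castSucc) + w (Fin.last q)) = 1 := by
        have : c ⬝ᵥ w = (∑ i : Fin q, c i.castSucc * w i.castSucc) + w (Fin.last q) := by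
          simp [dotProduct, Fin.sum_univ_castSucc, hcq]
        rw [← this, hsdef, inv_mul_cancel₀ (ne_of_gt hcw)]
      have hwy : w ⬝ᵥ y = (∑ i : Fin q, y i.castSucc * w i.castSucc)
          + w (Fin.last q) * y (Fin.last q) := by
        simp only [dotProduct, Fin.sum_univ_castSucc]
        congr 1
        exact Finset.sum_congr rfl fun i _ => by ring
      have hphi : phiCoupling q c y ystar
          = s * (∑ i : Fin q, y i.castSucc * w i.castSucc)
            + y (Fin.last q) * (1 - s * (∑ i : Fin q, c i.castSucc * w i.castSucc))
            - s * (b ⬝ᵥ u) := by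
        unfold phiCoupling
        rw [hup2]
        congr 2
        · rw [Finset.mul_sum]
          exact Finset.sum_congr rfl fun i _ => by rw [hup1 i]; ring
        · rw [Finset.mul_sum]
          congr 2
          exact Finset.sum_congr rfl fun i _ => by rw [hup1 i]; ring
      have hkey : phiCoupling q c y ystar = s * ((w ⬝ᵥ y) - (b ⬝ᵥ u)) := by
        rw [hphi, hwy]
        linear_combination (- y (Fin.last q)) * hsc
      rw [hkey] at hyst
      nlinarith [mul_pos hs (sub_pos.mpr hgt)]
    · -- c ⬝ᵥ w ≤ 0 : then w = 0 and hSne gives a contradiction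
      push_neg at hcw
      have hw0 : w = 0 := by
        by_contra hw0
        have hCnhds : C ∈ nhds c := mem_interior_iff_mem_nhds.mp hc
        obtain ⟨ε, hε, hball⟩ := Metric.mem_nhds_iff.mp hCnhds
        have hnw : 0 < ‖w‖ := norm_pos_iff.mpr hw0
        set δ : ℝ := ε / (2 * ‖w‖) with hδdef
        have hδ : 0 < δ := by positivity
        have hmemC : c - δ • w ∈ C := by
          apply hball
          rw [Metric.mem_ball, dist_eq_norm]
          have : c - δ • w - c = -(δ • w) := by abel
          rw [this, norm_neg, norm_smul, Real.norm_eq_abs, abs_of_pos hδ, hδdef]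
          rw [div_mul_eq_mul_div, mul_comm]
          rw [mul_comm (2:ℝ) ‖w‖, ← div_div]
          calc ‖w‖ * ε / ‖w‖ / 2 = ε / 2 := by
                rw [mul_div_assoc, mul_comm]
                field_simp
            _ < ε := by linarith
        have h1 : 0 ≤ w ⬝ᵥ (c - δ • w) := hwC _ hmemC
        rw [dotProduct_sub, dotProduct_smul, smul_eq_mul] at h1
        have hww : 0 < w ⬝ᵥ w := by
          have hne : w ⬝ᵥ w ≠ 0 := fun h => hw0 ((dotProduct_self_eq_zero).mp h)
          exact lt_of_le_of_ne (Finset.sum_nonneg fun i _ => mul_self_nonneg _) (Ne.symm hne)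
        have hcomm : w ⬝ᵥ c = c ⬝ᵥ w := dotProduct_comm w c
        nlinarith
      -- now u ≥ 0, Bᵀ u = 0, b ⬝ᵥ u > 0 contradicts S nonempty
      have hz0 : z = 0 := by
        have : z = -w := by rw [hwdef, neg_neg]
        rw [this, hw0, neg_zero]
      have hbu : 0 < u ⬝ᵥ b := by
        rw [hz0, zero_dotProduct] at hpos; linarith
      have hBt0 : Bᵀ.mulVec u = 0 := by rw [hBt, hw0, Matrix.mulVec_zero]
      obtain ⟨x₀, hx₀⟩ := hSne
      rw [hS] at hx₀
      have hle : u ⬝ᵥ b ≤ u ⬝ᵥ B.mulVec x₀ :=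
        Finset.sum_le_sum fun i _ => mul_le_mul_of_nonneg_left (hx₀ i) (hu i)
      have heq0 : u ⬝ᵥ B.mulVec x₀ = 0 := by
        rw [Matrix.dotProduct_mulVec, ← Matrix.mulVec_transpose, hBt0, zero_dotProduct]
      linarith
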